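/- In (L, B, k) as below, set H = D₁ + D₂ + D₃ + D₇ = D₃ + D₄ + D₅, R₁ = D₃, R₂ = D₁ + D₇, R₃ = D₅, R₄ = D₇. Then (H, R₁, R₂, R₃, R₄) is a ℤ-basis of L, the Gram matrix of B in this basis is diagonal with diagonal (1, −1, −1, −1, −1), and −k = 3H − R₁ − R₂ − R₃ − R₄. (This is a good basis of the Picard lattice of X = TV(−2,−1,−1,−1,−1,−2,−1).) -/

import Mathlib

/- The Picard lattice of the toric surface `X = TV(-2,-1,-1,-1,-1,-2,-1)`:
`L = ℤ⁵` with basis `(D₂, D₃, D₄, D₅, D₇)` and the intersection pairing given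
by the Gram matrix below; `D₁ = -D₂ + D₄ + D₅ - D₇`, `D₆ = D₂ + D₃ - D₅ - D₇`,
and the canonical class is `k = -(D₁ + ⋯ + D₇)`. -/

/-- Gram matrix of the intersection pairing in the basis `(D₂, D₃, D₄, D₅, D₇)`. -/
def gram : Matrix (Fin 5) (Fin 5) ℤ :=
  !![-1, 1, 0, 0, 0;
      1, -1, 1, 0, 0;
      0, 1, -1, 1, 0;
      0, 0, 1, -1, 0;
      0, 0, 0, 0, -1]

/-- The intersection pairing on `L = ℤ⁵`. -/
def picForm (x y : Fin 5 → ℤ) : ℤ := dotProduct x (gram.mulVec y)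

def vD2 : Fin 5 → ℤ := ![1, 0, 0, 0, 0]
def vD3 : Fin 5 → ℤ := ![0, 1, 0, 0, 0]
def vD4 : Fin 5 → ℤ := ![0, 0, 1, 0, 0]
def vD5 : Fin 5 → ℤ := ![0, 0, 0, 1, 0]
def vD7 : Fin 5 → ℤ := ![0, 0, 0, 0, 1]
def vD1 : Fin 5 → ℤ := -vD2 + vD4 + vD5 - vD7
def vD6 : Fin 5 → ℤ := vD2 + vD3 - vD5 - vD7

/-- The canonical class `k = -(D₁ + D₂ + D₃ + D₄ + D₅ + D₆ + D₇)`. -/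
def vK : Fin 5 → ℤ := -(vD1 + vD2 + vD3 + vD4 + vD5 + vD6 + vD7)

/-- The good basis `(H, R₁, R₂, R₃, R₄)` with `H = D₁ + D₂ + D₃ + D₇`,
`R₁ = D₃`, `R₂ = D₁ + D₇`, `R₃ = D₅`, `R₄ = D₇`. -/
def goodBasis : Fin 5 → Fin 5 → ℤ :=
  ![vD1 + vD2 + vD3 + vD7, vD3, vD1 + vD7, vD5, vD7]
set_option maxRecDepth 10000 in
def gbMat : Matrix (Fin 5) (Fin 5) ℤ := Matrix.transpose (Matrix.of goodBasis)

lemma gbMat_det : gbMat.det = 1 := by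
  simp [gbMat, goodBasis, vD1, vD2, vD3, vD4, vD5, vD7,
    Matrix.det_succ_row_zero, Fin.sum_univ_succ]
  decide

theorem goodBasis_of_picardLattice :
    vD1 + vD2 + vD3 + vD7 = vD3 + vD4 + vD5 ∧
    (∃ b : Module.Basis (Fin 5) ℤ (Fin 5 → ℤ), ∀ i, b i = goodBasis i) ∧
    (∀ i j, picForm (goodBasis i) (goodBasis j) =
      if i = j then (if i = 0 then 1 else -1) else 0) ∧
    -vK = 3 • goodBasis 0 - goodBasis 1 - goodBasis 2 - goodBasis 3 - goodBasis 4 := by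
  refine ⟨?_, ?_, ?_, ?_⟩
  · funext i; fin_cases i <;> simp [vD1, vD2, vD3, vD4, vD5, vD7]
  · have hInv : Invertible gbMat :=
      gbMat.invertibleOfIsUnitDet (by rw [gbMat_det]; exact isUnit_one)
    refine ⟨(Pi.basisFun ℤ (Fin 5)).map (Matrix.toLinearEquiv' gbMat hInv), fun i => ?_⟩
    funext j
    simp [Matrix.toLinearEquiv', Matrix.mulVec_single, gbMat, Matrix.mulVec, dotProduct,
      Pi.single_apply, Finset.sum_ite_eq]
    rfl
  · decide +kernel
  · funext i; fin_cases i <;>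
      simp [vK, vD1, vD2, vD3, vD4, vD5, vD6, vD7, goodBasis]
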